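/- arXiv:1504.01143 — 2 statements merged into one kernel-verified Lean document; each statement's English description precedes it below -/
import Mathlib

section
/- Let G1 and G2 be disjoint simple graphs and let G be obtained from their disjoint union by adding a single edge joining a vertex of G1 to a vertex of G2. Then G is a circle graph if and only if both G1 and G2 are circle graphs. -/
open SimpleGraph

/-- Two letters are interlaced in a word if their occurrences alternate. -/
def Interlaced {α : Type} [DecidableEq α] (W : List α) (a b : α) : Prop :=
  W.filter (fun x => x == a || x == b) = [a, b, a, b] ∨
  W.filter (fun x => x == a || x == b) = [b, a, b, a]

/-- The interlacement graph of a word. -/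
def interlacementGraph {α : Type} [DecidableEq α] (W : List α) : SimpleGraph α where
  Adj a b := a ≠ b ∧ (Interlaced W a b ∨ Interlaced W b a)
  symm := ⟨fun a b h => ⟨h.1.symm, h.2.symm⟩⟩
  loopless := ⟨fun a h => h.1 rfl⟩

/-- A double occurrence word: each letter of the alphabet occurs exactly twice. -/
def IsDOW {α : Type} [DecidableEq α] (W : List α) : Prop := ∀ a : α, W.count a = 2

/-- A circle graph: a graph isomorphic to the interlacement graph of a
double occurrence word. -/
def IsCircleGraph {V : Type} (G : SimpleGraph V) : Prop :=
  ∃ (n : ℕ) (W : List (Fin n)), IsDOW W ∧ Nonempty (G ≃g interlacementGraph W)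

/-- Local complementation at a vertex `v`: toggle adjacency inside `N(v)`. -/
def localComplement {V : Type} (G : SimpleGraph V) (v : V) : SimpleGraph V where
  Adj x y := x ≠ y ∧ ((G.Adj v x ∧ G.Adj v y ∧ ¬ G.Adj x y) ∨
    (¬ (G.Adj v x ∧ G.Adj v y) ∧ G.Adj x y))
  symm := by
    constructor
    rintro x y ⟨hxy, h | h⟩
    · exact ⟨hxy.symm, Or.inl ⟨h.2.1, h.1, fun hc => h.2.2 hc.symm⟩⟩
    · exact ⟨hxy.symm, Or.inr ⟨fun hc => h.1 ⟨hc.2, hc.1⟩, h.2.symm⟩⟩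
  loopless := ⟨fun x h => h.1 rfl⟩

/-- A split `(V1, X1; V2, X2)` of a graph. -/
def IsSplit {V : Type} (G : SimpleGraph V) (V1 X1 V2 X2 : Set V) : Prop :=
  V1 ∪ V2 = Set.univ ∧ Disjoint V1 V2 ∧ 2 ≤ V1.encard ∧ 2 ≤ V2.encard ∧
  X1 ⊆ V1 ∧ X2 ⊆ V2 ∧ ∀ x ∈ V1, ∀ y ∈ V2, (G.Adj x y ↔ x ∈ X1 ∧ y ∈ X2)

/-- A graph has a split. -/
def HasSplit {V : Type} (G : SimpleGraph V) : Prop :=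
  ∃ V1 X1 V2 X2, IsSplit G V1 X1 V2 X2

/-- Twin vertices: same neighbours outside `{u, v}`. -/
def IsTwinPair {V : Type} (G : SimpleGraph V) (u v : V) : Prop :=
  u ≠ v ∧ G.neighborSet u \ {v} = G.neighborSet v \ {u}

/-- Adjacent twins. -/
def AdjacentTwins {V : Type} (G : SimpleGraph V) (u v : V) : Prop :=
  G.Adj u v ∧ G.neighborSet u \ {v} = G.neighborSet v \ {u}

/-- Nonadjacent twins. -/
def NonadjacentTwins {V : Type} (G : SimpleGraph V) (u v : V) : Prop :=
  u ≠ v ∧ ¬ G.Adj u v ∧ G.neighborSet u = G.neighborSet v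

/-- Delete a vertex: keep the vertex set, remove all edges at `v`. -/
def deleteVertex {V : Type} (G : SimpleGraph V) (v : V) : SimpleGraph V where
  Adj x y := G.Adj x y ∧ x ≠ v ∧ y ≠ v
  symm := ⟨fun x y h => ⟨h.1.symm, h.2.2, h.2.1⟩⟩
  loopless := ⟨fun x h => G.irrefl h.1⟩

/-- `v` is a cutpoint of the connected graph `G`. -/
def IsCutpoint {V : Type} (G : SimpleGraph V) (v : V) : Prop :=
  G.Connected ∧ ∃ x y : V, x ≠ v ∧ y ≠ v ∧ ¬ (deleteVertex G v).Reachable x y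

/-- Cyclic equivalence of words: generated by rotations and reversals. -/
inductive CyclicEquiv {β : Type} : List β → List β → Prop
  | refl (l : List β) : CyclicEquiv l l
  | rot (l₁ l₂ : List β) : CyclicEquiv (l₁ ++ l₂) (l₂ ++ l₁)
  | rev (l : List β) : CyclicEquiv l l.reverse
  | symm {l₁ l₂ : List β} : CyclicEquiv l₁ l₂ → CyclicEquiv l₂ l₁
  | trans {l₁ l₂ l₃ : List β} : CyclicEquiv l₁ l₂ → CyclicEquiv l₂ l₃ → CyclicEquiv l₁ l₃

/-- `G` is 3-connected: more than 3 vertices, and removing fewer than 3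
vertices leaves it connected. -/
def ThreeConnected {V : Type} [Fintype V] (G : SimpleGraph V) : Prop :=
  3 < Fintype.card V ∧ ∀ K : Set V, K.ncard < 3 → (G.induce (Kᶜ : Set V)).Connected

/-- The disjoint union of two graphs, joined by a single edge from `a` to `b`. -/
def joinedByEdge {V₁ V₂ : Type} (G₁ : SimpleGraph V₁) (G₂ : SimpleGraph V₂)
    (a : V₁) (b : V₂) : SimpleGraph (V₁ ⊕ V₂) where
  Adj x y :=
    Sum.elim (fun u => Sum.elim (fun w => G₁.Adj u w) (fun w => u = a ∧ w = b) y)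
             (fun u => Sum.elim (fun w => u = b ∧ w = a) (fun w => G₂.Adj u w) y) x
  symm := by
    constructor
    rintro (u | u) (w | w) h
    · exact h.symm
    · exact ⟨h.2, h.1⟩
    · exact ⟨h.2, h.1⟩
    · exact h.symm
  loopless := by
    constructor
    rintro (u | u) h
    · exact G₁.irrefl h
    · exact G₂.irrefl h

attribute [local instance 2000] instBEqOfDecidableEq

section Helpers
variable {α β : Type} [DecidableEq α] [DecidableEq β]

lemma filter_pair_comm (W : List α) (a b : α) :
    W.filter (fun x => x == b || x == a) = W.filter (fun x => x == a || x == b) :=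
  List.filter_congr fun x _ => Bool.or_comm _ _

lemma interlaced_comm {W : List α} {a b : α} : Interlaced W b a ↔ Interlaced W a b := by
  unfold Interlaced
  rw [filter_pair_comm]
  tauto

lemma ig_adj (W : List α) (a b : α) :
    (interlacementGraph W).Adj a b ↔ a ≠ b ∧ Interlaced W a b := by
  show a ≠ b ∧ _ ↔ _
  rw [interlaced_comm (a := a) (b := b)]
  tauto

lemma beq_map {f : α → β} (hf : Function.Injective f) (x a : α) :
    (f x == f a) = (x == a) := by
  by_cases h : x = a
  · simp [h]
  · simp [h, beq_eq_false_iff_ne, hf.ne_iff]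

lemma filter_pair_map {f : α → β} (hf : Function.Injective f) (W : List α) (a b : α) :
    (W.map f).filter (fun x => x == f a || x == f b)
      = (W.filter (fun x => x == a || x == b)).map f := by
  rw [List.filter_map]
  congr 1
  apply List.filter_congr
  intro x _
  show (f x == f a || f x == f b) = _
  rw [beq_map hf, beq_map hf]

lemma interlaced_map {f : α → β} (hf : Function.Injective f) (W : List α) (a b : α) :
    Interlaced (W.map f) (f a) (f b) ↔ Interlaced W a b := by
  unfold Interlaced
  rw [filter_pair_map hf]
  constructor
  · rintro (h | h) <;> [left; right] <;>
      exact List.map_injective_iff.2 hf (by simpa using h)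
  · rintro (h | h) <;> [left; right] <;> simp [h]

lemma rot_aux {u v : List α} {a b : α} (h : u ++ v = [a, b, a, b]) :
    v ++ u = [a, b, a, b] ∨ v ++ u = [b, a, b, a] := by
  rcases u with _ | ⟨x1, _ | ⟨x2, _ | ⟨x3, _ | ⟨x4, rest⟩⟩⟩⟩ <;> simp_all
lemma interlaced_rot {l₁ l₂ : List α} {a b : α} :
    Interlaced (l₁ ++ l₂) a b ↔ Interlaced (l₂ ++ l₁) a b := by
  unfold Interlaced
  rw [List.filter_append, List.filter_append]
  constructor
  · rintro (h | h)
    · exact rot_aux h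
    · rcases rot_aux h with h' | h'
      · right; exact h'
      · left; exact h'
  · rintro (h | h)
    · exact rot_aux h
    · rcases rot_aux h with h' | h'
      · right; exact h'
      · left; exact h'

end Helpers

section Transfer
variable {α β : Type} [DecidableEq α] [DecidableEq β]

lemma interlaced_of_filter_eq {γ : Type} [DecidableEq γ] {W' : List γ} {W : List α}
    {f : α → γ} (hf : Function.Injective f) {a b : α}
    (h : W'.filter (fun s => s == f a || s == f b)
        = (W.filter (fun s => s == a || s == b)).map f) :
    Interlaced W' (f a) (f b) ↔ Interlaced W a b := by
  unfold Interlaced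
  rw [h]
  constructor
  · rintro (h' | h') <;> [left; right] <;>
      exact List.map_injective_iff.2 hf (by simpa using h')
  · rintro (h' | h') <;> [left; right] <;> simp [h']

lemma filter_pair_nil {L : List α} {a b : α} (ha : a ∉ L) (hb : b ∉ L) :
    L.filter (fun x => x == a || x == b) = [] := by
  rw [List.filter_eq_nil_iff]
  intro x hx
  simp only [Bool.or_eq_true, beq_iff_eq, not_or]
  exact ⟨fun h => ha (h ▸ hx), fun h => hb (h ▸ hx)⟩

lemma interlaced_filter {P : α → Bool} {W : List α} {a b : α} (ha : P a = true)
    (hb : P b = true) : Interlaced (W.filter P) a b ↔ Interlaced W a b := by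
  unfold Interlaced
  rw [List.filter_filter]
  have : W.filter (fun x => (x == a || x == b) && P x) = W.filter (fun x => x == a || x == b) :=
    List.filter_congr fun x _ => by
      by_cases h1 : x = a <;> by_cases h2 : x = b <;> simp [h1, h2, ha, hb]
  rw [this]

lemma circle_of_fintype {V σ : Type} [DecidableEq σ] [Fintype σ] {G : SimpleGraph V}
    (W : List σ) (hW : IsDOW W) (iso : G ≃g interlacementGraph W) : IsCircleGraph G := by
  let e := Fintype.equivFin σ
  refine ⟨Fintype.card σ, W.map e, fun c => ?_, ⟨iso.trans ⟨e, fun {u v} => ?_⟩⟩⟩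
  · have h := hW (e.symm c)
    have h2 := List.count_map_of_injective W e e.injective (e.symm c)
    rw [h] at h2
    simpa using h2
  · rw [ig_adj, ig_adj, interlaced_map e.injective, (Equiv.injective e).ne_iff]

lemma filterMap_subtype (P : α → Prop) [DecidablePred P] (W : List α) :
    (W.filterMap (fun s => if h : P s then some (⟨s, h⟩ : Subtype P) else none)).map
      Subtype.val = W.filter (fun s => decide (P s)) := by
  induction W with
  | nil => rfl
  | cons a l ih => by_cases h : P a <;> simp [List.filterMap_cons, h, ih, List.filter_cons]

lemma circle_embed {V V' : Type} {G : SimpleGraph V} {G' : SimpleGraph V'} (h : IsCircleGraph G)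
    (φ : V' → V) (hφ : Function.Injective φ) (hadj : ∀ u v, G'.Adj u v ↔ G.Adj (φ u) (φ v)) :
    IsCircleGraph G' := by
  classical
  obtain ⟨n, W, hW, ⟨e⟩⟩ := h
  set ψ : V' → Fin n := fun v => e (φ v) with hψdef
  have hψ : Function.Injective ψ := fun u v huv => hφ (e.toEquiv.injective huv)
  haveI : DecidablePred (· ∈ Set.range ψ) := Classical.decPred _
  set WS : List ↥(Set.range ψ) :=
    W.filterMap (fun s => if h : s ∈ Set.range ψ then some ⟨s, h⟩ else none) with hWS
  have hmap : WS.map Subtype.val = W.filter (fun s => decide (s ∈ Set.range ψ)) :=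
    filterMap_subtype _ W
  have hdow : IsDOW WS := by
    rintro ⟨s, hs⟩
    have h1 : WS.count ⟨s, hs⟩ = (WS.map Subtype.val).count s :=
      (List.count_map_of_injective _ _ Subtype.val_injective _).symm
    rw [h1, hmap, List.count_filter (by simpa using hs)]
    exact hW s
  have hint : ∀ p q : ↥(Set.range ψ), Interlaced WS p q ↔ Interlaced W p.1 q.1 := by
    intro p q
    rw [← interlaced_map Subtype.val_injective WS p q, hmap,
      interlaced_filter (by simp [p.2]) (by simp [q.2])]
  refine circle_of_fintype WS hdow ⟨Equiv.ofInjective ψ hψ, fun {u v} => ?_⟩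
  rw [ig_adj, hint]
  show (_ ∧ Interlaced W (ψ u) (ψ v)) ↔ _
  rw [hadj u v, ← e.map_rel_iff, ig_adj]
  exact and_congr ⟨fun h hc => h (Subtype.ext hc), fun h hc => h (congrArg Subtype.val hc)⟩
    Iff.rfl

end Transfer

section BigW
variable {α β : Type} [DecidableEq α] [DecidableEq β]

/-- The word for the joined graph: `A x B R x y C`. -/
def bigW (A B C : List α) (x : α) (R : List β) (y : β) : List (α ⊕ β) :=
  A.map Sum.inl ++ Sum.inl x ::
    (B.map Sum.inl ++ R.map Sum.inr ++ Sum.inl x :: Sum.inr y :: C.map Sum.inl)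

lemma beq_inl_inl (u c : α) : ((Sum.inl u : α ⊕ β) == Sum.inl c) = (u == c) :=
  beq_map Sum.inl_injective u c

lemma beq_inr_inr (u c : β) : ((Sum.inr u : α ⊕ β) == Sum.inr c) = (u == c) :=
  beq_map Sum.inr_injective u c

lemma beq_inl_inr (u : α) (c : β) : ((Sum.inl u : α ⊕ β) == Sum.inr c) = false :=
  beq_eq_false_iff_ne.mpr (by simp)

lemma beq_inr_inl (u : β) (c : α) : ((Sum.inr u : α ⊕ β) == Sum.inl c) = false :=
  beq_eq_false_iff_ne.mpr (by simp)

lemma filter_ll_nil (R : List β) (c d : α) :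
    (R.map Sum.inr).filter (fun s => s == (Sum.inl c : α ⊕ β) || s == Sum.inl d) = [] :=
  filter_pair_nil (by simp) (by simp)

lemma filter_rr_nil (A : List α) (c d : β) :
    (A.map Sum.inl).filter (fun s => s == (Sum.inr c : α ⊕ β) || s == Sum.inr d) = [] :=
  filter_pair_nil (by simp) (by simp)

lemma filter_lr_inl (A : List α) (c : α) (d : β) :
    (A.map Sum.inl).filter (fun s => s == (Sum.inl c : α ⊕ β) || s == Sum.inr d)
      = (A.filter (fun z => z == c)).map Sum.inl := by
  rw [List.filter_map]
  congr 1
  apply List.filter_congr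
  intro z _
  show ((Sum.inl z : α ⊕ β) == Sum.inl c || (Sum.inl z : α ⊕ β) == Sum.inr d) = (z == c)
  rw [beq_inl_inl, beq_inl_inr, Bool.or_false]

lemma filter_lr_inr (R : List β) (c : α) (d : β) :
    (R.map Sum.inr).filter (fun s => s == (Sum.inl c : α ⊕ β) || s == Sum.inr d)
      = (R.filter (fun z => z == d)).map Sum.inr := by
  rw [List.filter_map]
  congr 1
  apply List.filter_congr
  intro z _
  show ((Sum.inr z : α ⊕ β) == Sum.inl c || (Sum.inr z : α ⊕ β) == Sum.inr d) = (z == d)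
  rw [beq_inr_inr, beq_inr_inl, Bool.false_or]

lemma bigW_filter_ll (A B C : List α) (x : α) (R : List β) (y : β) (c d : α) :
    (bigW A B C x R y).filter (fun s => s == Sum.inl c || s == Sum.inl d)
      = ((A ++ x :: (B ++ x :: C)).filter (fun z => z == c || z == d)).map Sum.inl := by
  simp only [bigW, List.filter_append, List.filter_cons, filter_pair_map Sum.inl_injective,
    filter_ll_nil, beq_inl_inl, beq_inr_inl, Bool.or_self, if_false, List.map_append,
    List.map_cons, List.append_nil, List.nil_append]
  by_cases h : (x == c || x == d) = true <;> simp [h]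

lemma bigW_filter_rr (A B C : List α) (x : α) (R : List β) (y : β) (c d : β) :
    (bigW A B C x R y).filter (fun s => s == Sum.inr c || s == Sum.inr d)
      = ((R ++ [y]).filter (fun z => z == c || z == d)).map Sum.inr := by
  simp only [bigW, List.filter_append, List.filter_cons, filter_pair_map Sum.inr_injective,
    filter_rr_nil, beq_inr_inr, beq_inl_inr, Bool.or_self, if_false, List.map_append,
    List.map_cons, List.append_nil, List.nil_append]
  by_cases h : (y == c || y == d) = true <;> simp [h]

end BigW

section Mixed
variable {α β : Type} [DecidableEq α] [DecidableEq β]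

attribute [local instance 2000] instBEqOfDecidableEq

lemma filter_beq_nil {L : List α} {c : α} (h : c ∉ L) :
    L.filter (fun z => z == c) = [] := by
  rw [List.filter_beq, List.count_eq_zero.mpr h, List.replicate_zero]

lemma bigW_int_xy {A B C : List α} {x : α} {R : List β} {y : β}
    (hA : x ∉ A) (hB : x ∉ B) (hC : x ∉ C) (hR : R.count y = 1) :
    (bigW A B C x R y).filter (fun s => s == Sum.inl x || s == Sum.inr y)
      = [Sum.inl x, Sum.inr y, Sum.inl x, Sum.inr y] := by
  have h4 : R.filter (fun z => z == y) = [y] := by rw [List.filter_beq, hR]; rfl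
  simp [bigW, List.filter_append, List.filter_cons, filter_lr_inl, filter_lr_inr,
    filter_beq_nil hA, filter_beq_nil hB, filter_beq_nil hC, h4,
    beq_inl_inl, beq_inl_inr, beq_inr_inl, beq_inr_inr]

lemma shape_ne {γ : Type} {p q : γ} (hpq : p ≠ q) {u v : List γ}
    (hu : ∀ z ∈ u, z = p) (hv : ∀ z ∈ v, z = p) :
    ¬(u ++ q :: q :: v = [p, q, p, q] ∨ u ++ q :: q :: v = [q, p, q, p]) := by
  rintro (h | h) <;>
    rcases u with _ | ⟨u1, _ | ⟨u2, _ | ⟨u3, u'⟩⟩⟩ <;> simp_all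

/-- In all mixed cases other than `(x, y)`, the pair filter has the shape
`u ++ q :: q :: v` with all of `u, v` equal to `inl c`. -/
lemma bigW_not_int {A B C : List α} {x : α} {R : List β} {y : β} {c : α} {d : β}
    (hA : x ∉ A) (hB : x ∉ B) (hC : x ∉ C) (hRy : R.count y = 1)
    (hRd : d ≠ y → R.count d = 2) (hne : ¬(c = x ∧ d = y)) :
    ¬ Interlaced (bigW A B C x R y) (Sum.inl c) (Sum.inr d) := by
  have key : ∃ u v : List (α ⊕ β),
      (bigW A B C x R y).filter (fun s => s == Sum.inl c || s == Sum.inr d)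
        = u ++ Sum.inr d :: Sum.inr d :: v ∧
      (∀ z ∈ u, z = Sum.inl c) ∧ (∀ z ∈ v, z = Sum.inl c) := by
    by_cases hd : d = y
    · subst hd
      have hc : c ≠ x := fun h => hne ⟨h, rfl⟩
      have hRy' : R.filter (fun z => z == d) = [d] := by rw [List.filter_beq, hRy]; rfl
      refine ⟨(A.filter (fun z => z == c)).map Sum.inl ++ (B.filter (fun z => z == c)).map
        Sum.inl, (C.filter (fun z => z == c)).map Sum.inl, ?_, ?_, ?_⟩
      · simp [bigW, List.filter_append, List.filter_cons, filter_lr_inl, filter_lr_inr,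
          hRy', beq_inl_inl, beq_inl_inr, beq_inr_inl, beq_inr_inr,
          beq_eq_false_iff_ne.mpr (Ne.symm hc), hc]
      · intro z hz
        simp only [List.mem_append, List.mem_map, List.mem_filter, beq_iff_eq] at hz
        rcases hz with ⟨w, ⟨_, rfl⟩, rfl⟩ | ⟨w, ⟨_, rfl⟩, rfl⟩ <;> rfl
      · intro z hz
        simp only [List.mem_map, List.mem_filter, beq_iff_eq] at hz
        obtain ⟨w, ⟨_, rfl⟩, rfl⟩ := hz
        rfl
    · have hRd2 : R.filter (fun z => z == d) = [d, d] := by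
        rw [List.filter_beq, hRd hd]; rfl
      by_cases hc : c = x
      · subst hc
        refine ⟨[Sum.inl c], [Sum.inl c], ?_, by simp, by simp⟩
        simp [bigW, List.filter_append, List.filter_cons, filter_lr_inl, filter_lr_inr,
          hRd2, filter_beq_nil hA, filter_beq_nil hB, filter_beq_nil hC,
          beq_inl_inl, beq_inl_inr, beq_inr_inl, beq_inr_inr,
          beq_eq_false_iff_ne.mpr (Ne.symm hd)]
      · refine ⟨(A.filter (fun z => z == c)).map Sum.inl ++ (B.filter (fun z => z == c)).map
          Sum.inl, (C.filter (fun z => z == c)).map Sum.inl, ?_, ?_, ?_⟩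
        · simp [bigW, List.filter_append, List.filter_cons, filter_lr_inl, filter_lr_inr,
            hRd2, beq_inl_inl, beq_inl_inr, beq_inr_inl, beq_inr_inr,
            beq_eq_false_iff_ne.mpr (Ne.symm hc), beq_eq_false_iff_ne.mpr (Ne.symm hd)]
        · intro z hz
          simp only [List.mem_append, List.mem_map, List.mem_filter, beq_iff_eq] at hz
          rcases hz with ⟨w, ⟨_, rfl⟩, rfl⟩ | ⟨w, ⟨_, rfl⟩, rfl⟩ <;> rfl
        · intro z hz
          simp only [List.mem_map, List.mem_filter, beq_iff_eq] at hz
          obtain ⟨w, ⟨_, rfl⟩, rfl⟩ := hz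
          rfl
  obtain ⟨u, v, hfil, hu, hv⟩ := key
  intro hint
  unfold Interlaced at hint
  rw [hfil] at hint
  exact shape_ne (by simp) hu hv hint

end Mixed

section Main
variable {α β : Type} [DecidableEq α] [DecidableEq β]

attribute [local instance 2000] instBEqOfDecidableEq

lemma count_inl_map_inr (R : List β) (c : α) :
    (R.map Sum.inr : List (α ⊕ β)).count (Sum.inl c) = 0 :=
  List.count_eq_zero.mpr (by simp)

lemma count_inr_map_inl (A : List α) (d : β) :
    (A.map Sum.inl : List (α ⊕ β)).count (Sum.inr d) = 0 :=
  List.count_eq_zero.mpr (by simp)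

lemma bigW_dow {A B C : List α} {x : α} {R : List β} {y : β}
    (hW1 : ∀ c : α, (A ++ x :: (B ++ x :: C)).count c = 2)
    (hW2 : ∀ d : β, (R ++ [y]).count d = 2) :
    IsDOW (bigW A B C x R y) := by
  rintro (c | d)
  · have h := hW1 c
    clear hW1 hW2
    by_cases hc : c = x <;>
      simp only [bigW, List.count_append, List.count_cons, count_inl_map_inr, hc,
        List.count_map_of_injective _ _ Sum.inl_injective, Sum.inl.injEq, Sum.inr.injEq,
        if_true, if_false, reduceCtorEq] at h ⊢ <;>
      simp_all <;> omega
  · have h := hW2 d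
    clear hW1 hW2
    by_cases hd : d = y <;>
      simp only [bigW, List.count_append, List.count_cons, count_inr_map_inl, hd,
        List.count_map_of_injective _ _ Sum.inr_injective, Sum.inl.injEq, Sum.inr.injEq,
        if_true, if_false, reduceCtorEq] at h ⊢ <;>
      simp_all <;> omega

lemma mem_split_first {a : α} {l : List α} (h : a ∈ l) :
    ∃ s t, l = s ++ a :: t ∧ a ∉ s := by
  induction l with
  | nil => simp at h
  | cons b l ih =>
    by_cases hb : a = b
    · exact ⟨[], l, by simp [hb], by simp⟩
    · rcases ih ((List.mem_cons.mp h).resolve_left hb) with ⟨s, t, rfl, hs⟩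
      exact ⟨b :: s, t, by simp, by simp [hb, hs]⟩

lemma count_two_split {a : α} {l : List α} (h : l.count a = 2) :
    ∃ s t u, l = s ++ a :: (t ++ a :: u) ∧ a ∉ s ∧ a ∉ t ∧ a ∉ u := by
  have h1 : a ∈ l := List.count_pos_iff.mp (by omega)
  obtain ⟨s, r, rfl, hs⟩ := mem_split_first h1
  have hr : r.count a = 1 := by
    have hs0 : s.count a = 0 := List.count_eq_zero.mpr hs
    simp [List.count_append, List.count_cons, hs0] at h
    omega
  have h2 : a ∈ r := List.count_pos_iff.mp (by omega)
  obtain ⟨t, u, rfl, ht⟩ := mem_split_first h2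
  have hu : a ∉ u := by
    have ht0 : t.count a = 0 := List.count_eq_zero.mpr ht
    rw [← List.count_eq_zero (a := a) (l := u)]
    simp [List.count_append, List.count_cons, ht0] at hr
    omega
  exact ⟨s, t, u, rfl, hs, ht, hu⟩

end Main

/-- Attaching two disjoint graphs with a single edge gives a circle graph
iff both pieces are circle graphs. -/
theorem stmt4 {V₁ V₂ : Type} (G₁ : SimpleGraph V₁) (G₂ : SimpleGraph V₂) (a : V₁) (b : V₂) :
    IsCircleGraph (joinedByEdge G₁ G₂ a b) ↔ IsCircleGraph G₁ ∧ IsCircleGraph G₂ := by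
  constructor
  · intro h
    exact ⟨circle_embed h Sum.inl Sum.inl_injective fun u v => Iff.rfl,
           circle_embed h Sum.inr Sum.inr_injective fun u v => Iff.rfl⟩
  · rintro ⟨⟨n1, W1, h1, ⟨e1⟩⟩, ⟨n2, W2, h2, ⟨e2⟩⟩⟩
    set x := e1 a with hxdef
    set y := e2 b with hydef
    obtain ⟨A, B, C, hW1eq, hxA, hxB, hxC⟩ := count_two_split (h1 x)
    obtain ⟨S, T, U, hW2eq, hyS, hyT, hyU⟩ := count_two_split (h2 y)
    set R : List (Fin n2) := (U ++ S) ++ y :: T with hRdef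
    have eq1 : R ++ [y] = U ++ (S ++ y :: (T ++ [y])) := by simp [hRdef]
    have eq2 : S ++ y :: (T ++ y :: U) = (S ++ y :: (T ++ [y])) ++ U := by simp
    have hperm : (R ++ [y]).Perm W2 := by
      rw [hW2eq, eq1, eq2]
      exact List.perm_append_comm
    have hW2' : ∀ d, (R ++ [y]).count d = 2 := fun d => by
      rw [hperm.count_eq]; exact h2 d
    have hRy : R.count y = 1 := by
      have h := hW2' y
      simp [List.count_append] at h
      omega
    have hRd : ∀ d, d ≠ y → R.count d = 2 := by
      intro d hd
      have h := hW2' d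
      simpa [List.count_append, List.count_singleton, hd, Ne.symm hd] using h
    have hrot : ∀ c d : Fin n2, Interlaced W2 c d ↔ Interlaced (R ++ [y]) c d := by
      intro c d
      rw [hW2eq, eq1, eq2]
      exact interlaced_rot
    apply circle_of_fintype (σ := Fin n1 ⊕ Fin n2) (bigW A B C x R y)
      (bigW_dow (fun c => by rw [← hW1eq]; exact h1 c) hW2')
    refine ⟨Equiv.sumCongr e1.toEquiv e2.toEquiv, fun {u v} => ?_⟩
    have hmix : ∀ (p : V₁) (q : V₂),
        (interlacementGraph (bigW A B C x R y)).Adj (Sum.inl (e1 p)) (Sum.inr (e2 q)) ↔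
          (p = a ∧ q = b) := by
      intro p q
      rw [ig_adj]
      constructor
      · rintro ⟨hne, hint⟩
        by_contra hc
        have hc' : ¬(e1 p = x ∧ e2 q = y) := fun ⟨hp, hq⟩ =>
          hc ⟨e1.toEquiv.injective hp, e2.toEquiv.injective hq⟩
        exact bigW_not_int hxA hxB hxC hRy (hRd _) hc' hint
      · rintro ⟨rfl, rfl⟩
        exact ⟨by simp, Or.inl (bigW_int_xy hxA hxB hxC hRy)⟩
    rcases u with u | u <;> rcases v with v | v
    · show (interlacementGraph _).Adj (Sum.inl (e1 u)) (Sum.inl (e1 v)) ↔ G₁.Adj u v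
      rw [ig_adj,
        interlaced_of_filter_eq Sum.inl_injective (bigW_filter_ll A B C x R y (e1 u) (e1 v)),
        ← e1.map_rel_iff, ig_adj, ← hW1eq]
      exact and_congr (by simp) Iff.rfl
    · show (interlacementGraph _).Adj (Sum.inl (e1 u)) (Sum.inr (e2 v)) ↔ (u = a ∧ v = b)
      exact hmix u v
    · show (interlacementGraph _).Adj (Sum.inr (e2 u)) (Sum.inl (e1 v)) ↔ (u = b ∧ v = a)
      rw [(interlacementGraph _).adj_comm, hmix v u]
      tauto
    · show (interlacementGraph _).Adj (Sum.inr (e2 u)) (Sum.inr (e2 v)) ↔ G₂.Adj u v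
      rw [ig_adj,
        interlaced_of_filter_eq Sum.inr_injective (bigW_filter_rr A B C x R y (e2 u) (e2 v)),
        ← hrot, ← e2.map_rel_iff, ig_adj]
      exact and_congr (by simp) Iff.rfl
end

section
/- A simple graph G has a split (V1, X1; V2, X2) if and only if for any vertex v, the local complement G^v has a split of the form (V1, Y1; V2, Y2) with the same vertex partition. -/
open SimpleGraph

lemma localComplement_involutive {V : Type} (G : SimpleGraph V) (v : V) :
    localComplement (localComplement G v) v = G := by
  ext x y
  have hvx : G.Adj v x → v ≠ x := fun h => h.ne
  have hvy : G.Adj v y → v ≠ y := fun h => h.ne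
  have hxy : G.Adj x y → x ≠ y := fun h => h.ne
  have hvv : ¬ G.Adj v v := G.irrefl
  simp only [localComplement]
  tauto

lemma isSplit_swap {V : Type} {G : SimpleGraph V} {V₁ X₁ V₂ X₂ : Set V}
    (h : IsSplit G V₁ X₁ V₂ X₂) : IsSplit G V₂ X₂ V₁ X₁ := by
  obtain ⟨h1, h2, h3, h4, h5, h6, h7⟩ := h
  refine ⟨by rw [Set.union_comm]; exact h1, h2.symm, h4, h3, h6, h5, ?_⟩
  intro x hx y hy
  rw [adj_comm, h7 y hy x hx]
  tauto

lemma split_fwd {V : Type} {G : SimpleGraph V} {V₁ X₁ V₂ X₂ : Set V} {v : V}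
    (hv1 : v ∈ V₁) (h : IsSplit G V₁ X₁ V₂ X₂) :
    ∃ Y₁ Y₂ : Set V, IsSplit (localComplement G v) V₁ Y₁ V₂ Y₂ := by
  obtain ⟨h1, h2, h3, h4, h5, h6, h7⟩ := h
  refine ⟨{x | (x ∈ X₁ ∧ ¬(v ∈ X₁ ∧ G.Adj v x)) ∨
    (x ∈ V₁ ∧ v ∈ X₁ ∧ G.Adj v x ∧ x ∉ X₁)}, X₂, h1, h2, h3, h4, ?_, h6, ?_⟩
  · intro x hx
    rcases hx with ⟨hx1, _⟩ | ⟨hx1, _⟩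
    · exact h5 hx1
    · exact hx1
  · intro x hx y hy
    have hxy : x ≠ y := fun hh => Set.disjoint_left.mp h2 hx (hh ▸ hy)
    have hGxy := h7 x hx y hy
    have hGvy := h7 v hv1 y hy
    simp only [localComplement, Set.mem_setOf_eq, hGxy, hGvy]
    tauto

lemma split_fwd' {V : Type} {G : SimpleGraph V} {V₁ V₂ : Set V} {v : V}
    (h : ∃ X₁ X₂ : Set V, IsSplit G V₁ X₁ V₂ X₂) :
    ∃ Y₁ Y₂ : Set V, IsSplit (localComplement G v) V₁ Y₁ V₂ Y₂ := by
  obtain ⟨X₁, X₂, hs⟩ := h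
  have hv : v ∈ V₁ ∪ V₂ := hs.1 ▸ Set.mem_univ v
  rcases hv with hv | hv
  · exact split_fwd hv hs
  · obtain ⟨Y₁, Y₂, hs'⟩ := split_fwd hv (isSplit_swap hs)
    exact ⟨Y₂, Y₁, isSplit_swap hs'⟩

/-- `G` has a split `(V1, X1; V2, X2)` iff the local complement `G^v` has a
split with the same vertex partition. -/
theorem stmt8 {V : Type} (G : SimpleGraph V) (V₁ V₂ : Set V) (v : V) :
    (∃ X₁ X₂ : Set V, IsSplit G V₁ X₁ V₂ X₂) ↔
      ∃ Y₁ Y₂ : Set V, IsSplit (localComplement G v) V₁ Y₁ V₂ Y₂ := by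
  constructor
  · exact split_fwd'
  · intro h
    have := split_fwd' (v := v) h
    rwa [localComplement_involutive] at this
end
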